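/- Let σ, ω, Ω, K ∈ ℝ with ω ≠ 0, Ω ≠ 0 and Ω ≠ 2ω, and let A ∈ ℂ. Define x₁ : ℝ → ℝ by x₁(T) = 2·Re( (K(σ−iω)·conj(A)/2) · ( e^{(σ+i(Ω−ω))T}/(Ω(Ω−2ω)) + e^{(σ−iω)T}/(2ωΩ) − e^{(σ+iω)T}/(2ω(2ω−Ω)) ) ). Then for all T ∈ ℝ, x₁''(T) − 2σ·x₁'(T) + (σ²+ω²)·x₁(T) = 2·Re( −(K/2)(σ−iω)·conj(A)·e^{(σ+i(Ω−ω))T} ). -/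

import Mathlib

private lemma hasDerivAt_two_re_mul_exp (c a : ℂ) (T : ℝ) :
    HasDerivAt (fun T : ℝ => 2 * (c * Complex.exp (a * T)).re)
      (2 * (c * a * Complex.exp (a * T)).re) T := by
  have h1 : HasDerivAt (fun T : ℝ => (T : ℂ)) 1 T := by
    simpa using (hasDerivAt_id T).ofReal_comp
  have h2 := h1.const_mul a
  have h3 := (Complex.hasDerivAt_exp (a * T)).comp T h2
  have h4 := h3.const_mul c
  have h5 := (Complex.reCLM.hasFDerivAt.comp_hasDerivAt T h4).const_mul (2:ℝ)
  simpa [mul_comm, mul_assoc, mul_left_comm, Function.comp] using h5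

theorem stmt_2 (σ ω Ω K : ℝ) (hω : ω ≠ 0) (hΩ : Ω ≠ 0) (hΩω : Ω ≠ 2 * ω) (A : ℂ)
    (x₁ : ℝ → ℝ)
    (hx₁ : ∀ T : ℝ, x₁ T =
      2 * (((K : ℂ) * ((σ : ℂ) - (ω : ℂ) * Complex.I) * (starRingEnd ℂ) A / 2) *
        (Complex.exp (((σ : ℂ) + ((Ω : ℂ) - (ω : ℂ)) * Complex.I) * (T : ℂ)) /
            ((Ω : ℂ) * ((Ω : ℂ) - 2 * (ω : ℂ)))
          + Complex.exp (((σ : ℂ) - (ω : ℂ) * Complex.I) * (T : ℂ)) /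
            (2 * (ω : ℂ) * (Ω : ℂ))
          - Complex.exp (((σ : ℂ) + (ω : ℂ) * Complex.I) * (T : ℂ)) /
            (2 * (ω : ℂ) * (2 * (ω : ℂ) - (Ω : ℂ))))).re) :
    ∀ T : ℝ,
      deriv (deriv x₁) T - 2 * σ * deriv x₁ T + (σ ^ 2 + ω ^ 2) * x₁ T =
        2 * (-((K : ℂ) / 2) * ((σ : ℂ) - (ω : ℂ) * Complex.I) * (starRingEnd ℂ) A *
          Complex.exp (((σ : ℂ) + ((Ω : ℂ) - (ω : ℂ)) * Complex.I) * (T : ℂ))).re := by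
  have hωC : (ω : ℂ) ≠ 0 := Complex.ofReal_ne_zero.mpr hω
  have hΩC : (Ω : ℂ) ≠ 0 := Complex.ofReal_ne_zero.mpr hΩ
  have hd1 : (Ω : ℂ) - 2 * (ω : ℂ) ≠ 0 := by
    intro h; exact hΩω (by exact_mod_cast sub_eq_zero.mp h)
  have hd2 : 2 * (ω : ℂ) - (Ω : ℂ) ≠ 0 := by
    intro h; exact hΩω (by exact_mod_cast (sub_eq_zero.mp h).symm)
  set C : ℂ := (K : ℂ) * ((σ : ℂ) - (ω : ℂ) * Complex.I) * (starRingEnd ℂ) A / 2 with hC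
  set a1 : ℂ := (σ : ℂ) + ((Ω : ℂ) - (ω : ℂ)) * Complex.I with ha1
  set a2 : ℂ := (σ : ℂ) - (ω : ℂ) * Complex.I with ha2
  set a3 : ℂ := (σ : ℂ) + (ω : ℂ) * Complex.I with ha3
  -- quadratic characteristic values
  have q1 : a1 * a1 - 2 * (σ:ℂ) * a1 + ((σ:ℂ)^2 + (ω:ℂ)^2)
      = -((Ω:ℂ) * ((Ω:ℂ) - 2 * (ω:ℂ))) := by
    rw [ha1]; linear_combination ((Ω:ℂ) - (ω:ℂ))^2 * Complex.I_sq
  have q2 : a2 * a2 - 2 * (σ:ℂ) * a2 + ((σ:ℂ)^2 + (ω:ℂ)^2) = 0 := by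
    rw [ha2]; linear_combination (ω:ℂ)^2 * Complex.I_sq
  have q3 : a3 * a3 - 2 * (σ:ℂ) * a3 + ((σ:ℂ)^2 + (ω:ℂ)^2) = 0 := by
    rw [ha3]; linear_combination (ω:ℂ)^2 * Complex.I_sq
  have h1 : C / ((Ω:ℂ) * ((Ω:ℂ) - 2 * (ω:ℂ))) *
      (a1 * a1 - 2 * (σ:ℂ) * a1 + ((σ:ℂ)^2 + (ω:ℂ)^2)) = -C := by
    rw [q1]; field_simp
  have h2 : C / (2 * (ω:ℂ) * (Ω:ℂ)) *
      (a2 * a2 - 2 * (σ:ℂ) * a2 + ((σ:ℂ)^2 + (ω:ℂ)^2)) = 0 := by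
    rw [q2]; ring
  have h3 : C / (2 * (ω:ℂ) * (2 * (ω:ℂ) - (Ω:ℂ))) *
      (a3 * a3 - 2 * (σ:ℂ) * a3 + ((σ:ℂ)^2 + (ω:ℂ)^2)) = 0 := by
    rw [q3]; ring
  -- x₁ as explicit sum
  have hxf : x₁ = fun T : ℝ =>
      2 * (C / ((Ω:ℂ) * ((Ω:ℂ) - 2 * (ω:ℂ))) * Complex.exp (a1 * T)).re
        + 2 * (C / (2 * (ω:ℂ) * (Ω:ℂ)) * Complex.exp (a2 * T)).re
        - 2 * (C / (2 * (ω:ℂ) * (2 * (ω:ℂ) - (Ω:ℂ))) * Complex.exp (a3 * T)).re := by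
    funext T
    rw [hx₁ T]
    have h : C * (Complex.exp (a1 * T) / ((Ω : ℂ) * ((Ω : ℂ) - 2 * (ω : ℂ)))
        + Complex.exp (a2 * T) / (2 * (ω : ℂ) * (Ω : ℂ))
        - Complex.exp (a3 * T) / (2 * (ω : ℂ) * (2 * (ω : ℂ) - (Ω : ℂ))))
        = C / ((Ω:ℂ) * ((Ω:ℂ) - 2 * (ω:ℂ))) * Complex.exp (a1 * T)
          + C / (2 * (ω:ℂ) * (Ω:ℂ)) * Complex.exp (a2 * T)
          - C / (2 * (ω:ℂ) * (2 * (ω:ℂ) - (Ω:ℂ))) * Complex.exp (a3 * T) := by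
      ring
    rw [h, Complex.sub_re, Complex.add_re]; ring
  have hD1 : ∀ T : ℝ, HasDerivAt x₁
      (2 * (C / ((Ω:ℂ) * ((Ω:ℂ) - 2 * (ω:ℂ))) * a1 * Complex.exp (a1 * T)).re
        + 2 * (C / (2 * (ω:ℂ) * (Ω:ℂ)) * a2 * Complex.exp (a2 * T)).re
        - 2 * (C / (2 * (ω:ℂ) * (2 * (ω:ℂ) - (Ω:ℂ))) * a3 * Complex.exp (a3 * T)).re) T := by
    intro T
    rw [hxf]
    exact ((hasDerivAt_two_re_mul_exp _ a1 T).add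
      (hasDerivAt_two_re_mul_exp _ a2 T)).sub (hasDerivAt_two_re_mul_exp _ a3 T)
  have hderiv1 : deriv x₁ = fun T : ℝ =>
      2 * (C / ((Ω:ℂ) * ((Ω:ℂ) - 2 * (ω:ℂ))) * a1 * Complex.exp (a1 * T)).re
        + 2 * (C / (2 * (ω:ℂ) * (Ω:ℂ)) * a2 * Complex.exp (a2 * T)).re
        - 2 * (C / (2 * (ω:ℂ) * (2 * (ω:ℂ) - (Ω:ℂ))) * a3 * Complex.exp (a3 * T)).re :=
    funext fun T => (hD1 T).deriv
  have hD2 : ∀ T : ℝ, HasDerivAt (deriv x₁)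
      (2 * (C / ((Ω:ℂ) * ((Ω:ℂ) - 2 * (ω:ℂ))) * a1 * a1 * Complex.exp (a1 * T)).re
        + 2 * (C / (2 * (ω:ℂ) * (Ω:ℂ)) * a2 * a2 * Complex.exp (a2 * T)).re
        - 2 * (C / (2 * (ω:ℂ) * (2 * (ω:ℂ) - (Ω:ℂ))) * a3 * a3 * Complex.exp (a3 * T)).re) T := by
    intro T
    rw [hderiv1]
    exact ((hasDerivAt_two_re_mul_exp _ a1 T).add
      (hasDerivAt_two_re_mul_exp _ a2 T)).sub (hasDerivAt_two_re_mul_exp _ a3 T)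
  intro T
  rw [(hD2 T).deriv, hderiv1, hx₁ T]
  have key : (C / ((Ω:ℂ) * ((Ω:ℂ) - 2 * (ω:ℂ))) * a1 * a1 * Complex.exp (a1 * T)
        + C / (2 * (ω:ℂ) * (Ω:ℂ)) * a2 * a2 * Complex.exp (a2 * T)
        - C / (2 * (ω:ℂ) * (2 * (ω:ℂ) - (Ω:ℂ))) * a3 * a3 * Complex.exp (a3 * T))
      - ((2 * σ : ℝ) : ℂ) * (C / ((Ω:ℂ) * ((Ω:ℂ) - 2 * (ω:ℂ))) * a1 * Complex.exp (a1 * T)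
        + C / (2 * (ω:ℂ) * (Ω:ℂ)) * a2 * Complex.exp (a2 * T)
        - C / (2 * (ω:ℂ) * (2 * (ω:ℂ) - (Ω:ℂ))) * a3 * Complex.exp (a3 * T))
      + ((σ ^ 2 + ω ^ 2 : ℝ) : ℂ) * (C *
        (Complex.exp (a1 * T) / ((Ω : ℂ) * ((Ω : ℂ) - 2 * (ω : ℂ)))
          + Complex.exp (a2 * T) / (2 * (ω : ℂ) * (Ω : ℂ))
          - Complex.exp (a3 * T) / (2 * (ω : ℂ) * (2 * (ω : ℂ) - (Ω : ℂ)))))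
      = -((K : ℂ) / 2) * ((σ : ℂ) - (ω : ℂ) * Complex.I) * (starRingEnd ℂ) A *
          Complex.exp (a1 * T) := by
    have hCr : -((K : ℂ) / 2) * ((σ : ℂ) - (ω : ℂ) * Complex.I) * (starRingEnd ℂ) A = -C := by
      rw [hC]; ring
    rw [hCr]
    push_cast
    linear_combination Complex.exp (a1 * T) * h1 + Complex.exp (a2 * T) * h2
      - Complex.exp (a3 * T) * h3
  have hre := congrArg (fun z : ℂ => 2 * z.re) key
  simp only [Complex.add_re, Complex.sub_re, Complex.re_ofReal_mul] at hre
  linarith [hre]
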